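/- For a nonempty set 𝔓 of probability measures on (Ω,𝓕) the following are equivalent: (1) 𝔓 is of class (S); (2) there is a set 𝔔 of probability measures on (Ω,𝓕) with 𝔔 ≈ 𝔓 that is majorised by some (possibly non-σ-finite) measure μ on (Ω,𝓕), meaning every Q∈𝔔 has a density with respect to μ. Moreover, if 𝔔 is as in (2), then sca_𝐜 equals the band generated by 𝔔 in ca_𝐜, and also the band generated by 𝔔 in ca. -/

import Mathlib

open MeasureTheory Set Filter

namespace Robust

universe u

variable {Ω : Type*} [MeasurableSpace Ω]

/-- `N` is a `𝔓`-polar event: every measure in `𝔓` assigns it measure zero. -/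
def Polar (𝔓 : Set (Measure Ω)) (N : Set Ω) : Prop := ∀ P ∈ 𝔓, P N = 0

/-- `f ≤ g` holds `𝔓`-quasi surely. -/
def QSLe (𝔓 : Set (Measure Ω)) (f g : Ω → ℝ) : Prop := Polar 𝔓 {ω | ¬ f ω ≤ g ω}

/-- `f = g` holds `𝔓`-quasi surely; this is the equivalence relation defining `L⁰_𝐜`. -/
def QSEq (𝔓 : Set (Measure Ω)) (f g : Ω → ℝ) : Prop := QSLe 𝔓 f g ∧ QSLe 𝔓 g f

/-- A representative of an element of `L^∞_𝐜`: a measurable, `𝔓`-q.s. bounded function. -/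
def MemLinf (𝔓 : Set (Measure Ω)) (f : Ω → ℝ) : Prop :=
  Measurable f ∧ ∃ m : ℝ, QSLe 𝔓 (fun ω => |f ω|) fun _ => m

/-- The `L^∞_𝐜` norm of (the class of) `f`. -/
noncomputable def linfNorm (𝔓 : Set (Measure Ω)) (f : Ω → ℝ) : ℝ :=
  sInf {m : ℝ | 0 ≤ m ∧ QSLe 𝔓 (fun ω => |f ω|) fun _ => m}

/-- `g` is a `𝔓`-q.s. upper bound of the set of functions `S`. -/
def IsQSUB (𝔓 : Set (Measure Ω)) (S : Set (Ω → ℝ)) (g : Ω → ℝ) : Prop := ∀ f ∈ S, QSLe 𝔓 f g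

/-- `g` is a `𝔓`-q.s. lower bound of the set of functions `S`. -/
def IsQSLB (𝔓 : Set (Measure Ω)) (S : Set (Ω → ℝ)) (g : Ω → ℝ) : Prop := ∀ f ∈ S, QSLe 𝔓 g f

/-- `g` is a supremum of `S` in `L⁰_𝐜` (least upper bound for the q.s. order). -/
def IsQSSup (𝔓 : Set (Measure Ω)) (S : Set (Ω → ℝ)) (g : Ω → ℝ) : Prop :=
  IsQSUB 𝔓 S g ∧ ∀ h : Ω → ℝ, Measurable h → IsQSUB 𝔓 S h → QSLe 𝔓 g h

/-- `g` is an infimum of `S` in `L⁰_𝐜` (greatest lower bound for the q.s. order). -/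
def IsQSInf (𝔓 : Set (Measure Ω)) (S : Set (Ω → ℝ)) (g : Ω → ℝ) : Prop :=
  IsQSLB 𝔓 S g ∧ ∀ h : Ω → ℝ, Measurable h → IsQSLB 𝔓 S h → QSLe 𝔓 h g

/-- `S` is an order support of the measure `μ` relative to `𝔓`. -/
def IsOrderSupport (𝔓 : Set (Measure Ω)) (μ : Measure Ω) (S : Set Ω) : Prop :=
  MeasurableSet S ∧ μ Sᶜ = 0 ∧
    ∀ N : Set Ω, MeasurableSet N → μ (N ∩ S) = 0 → Polar 𝔓 (N ∩ S)

/-- The measure `μ` is supported (relative to the polar events of `𝔓`). -/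
def Supported (𝔓 : Set (Measure Ω)) (μ : Measure Ω) : Prop := ∃ S, IsOrderSupport 𝔓 μ S

/-- Two sets of measures are equivalent: they have the same polar events. -/
def PolarEquiv (𝔓 𝔔 : Set (Measure Ω)) : Prop :=
  ∀ N : Set Ω, MeasurableSet N → (Polar 𝔓 N ↔ Polar 𝔔 N)

/-- `𝔔` is a supported alternative to `𝔓`. -/
def IsSuppAlt (𝔓 𝔔 : Set (Measure Ω)) : Prop :=
  𝔔.Nonempty ∧ (∀ Q ∈ 𝔔, IsProbabilityMeasure Q) ∧ PolarEquiv 𝔓 𝔔 ∧ ∀ Q ∈ 𝔔, Supported 𝔓 Q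

/-- `𝔓` is of class (S). -/
def ClassS (𝔓 : Set (Measure Ω)) : Prop := ∃ 𝔔 : Set (Measure Ω), IsSuppAlt 𝔓 𝔔

/-- The total variation norm of a signed measure. -/
noncomputable def tv (μ : SignedMeasure Ω) : ℝ := (μ.totalVariation Set.univ).toReal

/-- `ca_𝐜`: signed measures whose total variation vanishes on `𝔓`-polar events. -/
def caC (𝔓 : Set (Measure Ω)) : Set (SignedMeasure Ω) :=
  {μ | ∀ N : Set Ω, MeasurableSet N → Polar 𝔓 N → μ.totalVariation N = 0}

/-- `sca_𝐜`: members of `ca_𝐜` whose total variation is supported. -/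
def scaC (𝔓 : Set (Measure Ω)) : Set (SignedMeasure Ω) :=
  {μ | μ ∈ caC 𝔓 ∧ Supported 𝔓 μ.totalVariation}

/-- Integral of `f` against a signed measure, via the Jordan decomposition. -/
noncomputable def integSM (f : Ω → ℝ) (μ : SignedMeasure Ω) : ℝ :=
  ∫ ω, f ω ∂μ.toJordanDecomposition.posPart - ∫ ω, f ω ∂μ.toJordanDecomposition.negPart

/-- `ca_{𝐜,+}`: finite (nonnegative) measures vanishing on `𝔓`-polar events. -/
def caCpos (𝔓 : Set (Measure Ω)) : Set (Measure Ω) :=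
  {μ | IsFiniteMeasure μ ∧ ∀ N : Set Ω, MeasurableSet N → Polar 𝔓 N → μ N = 0}

/-- Order convergence in `L⁰_𝐜` of a net `X` to `x`: there is an antitone net of measurable
functions with q.s. infimum `0` dominating `|X α - x|`. -/
def OrderConvTo (𝔓 : Set (Measure Ω)) {ι : Type u} [Preorder ι]
    (X : ι → Ω → ℝ) (x : Ω → ℝ) : Prop :=
  ∃ Y : ι → Ω → ℝ, (∀ α, Measurable (Y α)) ∧
    (∀ α β, α ≤ β → QSLe 𝔓 (Y β) (Y α)) ∧
    IsQSInf 𝔓 (Set.range Y) (fun _ => 0) ∧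
    ∀ α, QSLe 𝔓 (fun ω => |X α ω - x ω|) (Y α)

/-- Order convergence in `L^∞_𝐜` of a net `X` to `x`: the dominating net lies in `L^∞_𝐜`. -/
def OrderConvToLinf (𝔓 : Set (Measure Ω)) {ι : Type u} [Preorder ι]
    (X : ι → Ω → ℝ) (x : Ω → ℝ) : Prop :=
  ∃ Y : ι → Ω → ℝ, (∀ α, MemLinf 𝔓 (Y α)) ∧
    (∀ α β, α ≤ β → QSLe 𝔓 (Y β) (Y α)) ∧
    IsQSInf 𝔓 (Set.range Y) (fun _ => 0) ∧
    ∀ α, QSLe 𝔓 (fun ω => |X α ω - x ω|) (Y α)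

/-- A set of (classes of) functions in `L⁰_𝐜` is order closed: it contains (a representative of)
the order limit of every order convergent net of its elements. -/
def OrderClosedL0 (𝔓 : Set (Measure Ω)) (𝒞 : Set (Ω → ℝ)) : Prop :=
  ∀ (ι : Type u) [Preorder ι] [IsDirected ι (· ≤ ·)] [Nonempty ι],
    ∀ (X : ι → Ω → ℝ) (x : Ω → ℝ), (∀ α, X α ∈ 𝒞) → Measurable x →
      OrderConvTo 𝔓 X x → ∃ x' ∈ 𝒞, QSEq 𝔓 x x'

/-- A subset of `L^∞_𝐜` is order closed. -/
def OrderClosedLinf (𝔓 : Set (Measure Ω)) (𝒞 : Set (Ω → ℝ)) : Prop :=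
  ∀ (ι : Type u) [Preorder ι] [IsDirected ι (· ≤ ·)] [Nonempty ι],
    ∀ (X : ι → Ω → ℝ) (x : Ω → ℝ), (∀ α, X α ∈ 𝒞) → MemLinf 𝔓 x →
      OrderConvToLinf 𝔓 X x → ∃ x' ∈ 𝒞, QSEq 𝔓 x x'

/-- `L^∞_𝐜` is Dedekind complete: every nonempty subset bounded above has a supremum. -/
def LinfDedekind (𝔓 : Set (Measure Ω)) : Prop :=
  ∀ S : Set (Ω → ℝ), S.Nonempty → (∀ f ∈ S, MemLinf 𝔓 f) →
    (∃ h, MemLinf 𝔓 h ∧ IsQSUB 𝔓 S h) →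
    ∃ g, MemLinf 𝔓 g ∧ IsQSSup 𝔓 S g

/-- `L^∞_𝐜` has the countable sup property. -/
def LinfCountableSup (𝔓 : Set (Measure Ω)) : Prop :=
  ∀ S : Set (Ω → ℝ), (∀ f ∈ S, MemLinf 𝔓 f) →
    ∀ g, MemLinf 𝔓 g → IsQSSup 𝔓 S g →
      ∃ D ⊆ S, D.Countable ∧ IsQSSup 𝔓 D g

/-- indicator function of a set, real valued. -/
noncomputable def indC (A : Set Ω) : Ω → ℝ := A.indicator 1

/-- `𝔔` is majorised by a (possibly non-σ-finite) measure `μ`: each `Q ∈ 𝔔` has a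
`μ`-density. -/
def Majorised {Ω : Type*} [MeasurableSpace Ω] (𝔔 : Set (Measure Ω)) : Prop :=
  ∃ μ : Measure Ω, ∀ Q ∈ 𝔔, ∃ f : Ω → ENNReal, Measurable f ∧ Q = μ.withDensity f

/-- `B` is a band in the (sub)lattice `M` of the vector lattice of signed measures with the
setwise order: a subspace, solid in `M`, and closed under existing suprema in `M`. -/
def IsBandIn {Ω : Type*} [MeasurableSpace Ω] (M B : Set (SignedMeasure Ω)) : Prop :=
  B ⊆ M ∧ (0 : SignedMeasure Ω) ∈ B ∧
  (∀ μ ∈ B, ∀ ν ∈ B, μ + ν ∈ B) ∧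
  (∀ (a : ℝ), ∀ μ ∈ B, a • μ ∈ B) ∧
  (∀ μ ∈ M, ∀ ν ∈ B,
      (∀ A : Set Ω, MeasurableSet A → μ.totalVariation A ≤ ν.totalVariation A) → μ ∈ B) ∧
  (∀ S ⊆ B, ∀ μ ∈ M,
      ((∀ ν ∈ S, ν ≤ μ) ∧ ∀ η ∈ M, (∀ ν ∈ S, ν ≤ η) → μ ≤ η) → μ ∈ B)

/-- `B` is the band generated by `G` in `M`. -/
def IsBandGenBy {Ω : Type*} [MeasurableSpace Ω] (M B G : Set (SignedMeasure Ω)) : Prop :=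
  IsBandIn M B ∧ G ⊆ B ∧ ∀ B' : Set (SignedMeasure Ω), IsBandIn M B' → G ⊆ B' → B ⊆ B'

/-- The set of measures `𝔔` viewed as signed measures. -/
def toSgn {Ω : Type*} [MeasurableSpace Ω] (𝔔 : Set (Measure Ω)) : Set (SignedMeasure Ω) :=
  {s | ∃ Q ∈ 𝔔, ∀ A : Set Ω, MeasurableSet A → s A = (Q A).toReal}

instance tv_finite (s : SignedMeasure Ω) : IsFiniteMeasure s.totalVariation := by
  unfold SignedMeasure.totalVariation; infer_instance

lemma exists_jordan_set (s : SignedMeasure Ω) :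
    ∃ i : Set Ω, MeasurableSet i ∧ ∀ A, MeasurableSet A →
      s.totalVariation A = ENNReal.ofReal (s (i ∩ A)) + ENNReal.ofReal (-(s (iᶜ ∩ A))) ∧
      0 ≤ s (i ∩ A) ∧ s (iᶜ ∩ A) ≤ 0 := by
  obtain ⟨i, hi₁, hi₂, hi₃, hp, hn⟩ := s.toJordanDecomposition_spec
  refine ⟨i, hi₁, fun A hA => ?_⟩
  have h1 : 0 ≤ s (i ∩ A) := by
    have := VectorMeasure.subset_le_of_restrict_le_restrict 0 s hi₁ hi₂ (Set.inter_subset_left (t := A))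
    simpa using this
  have h2 : s (iᶜ ∩ A) ≤ 0 := by
    have := VectorMeasure.subset_le_of_restrict_le_restrict s 0 hi₁.compl hi₃ (Set.inter_subset_left (t := A))
    simpa using this
  refine ⟨?_, h1, h2⟩
  rw [SignedMeasure.totalVariation, Measure.add_apply, hp, hn,
    SignedMeasure.toMeasureOfZeroLE_apply _ hi₂ hi₁ hA,
    SignedMeasure.toMeasureOfLEZero_apply _ hi₃ hi₁.compl hA,
    ENNReal.ofReal_eq_coe_nnreal h1, ENNReal.ofReal_eq_coe_nnreal (neg_nonneg.mpr h2)]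

lemma tv_zero_iff (s : SignedMeasure Ω) {N : Set Ω} (hN : MeasurableSet N) :
    s.totalVariation N = 0 ↔ ∀ A, A ⊆ N → MeasurableSet A → s A = 0 := by
  constructor
  · intro h A hAN _
    exact s.null_of_totalVariation_zero (measure_mono_null hAN h)
  · intro h
    obtain ⟨i, hi, hspec⟩ := exists_jordan_set s
    obtain ⟨heq, -, -⟩ := hspec N hN
    rw [heq, h _ inter_subset_right (hi.inter hN), h _ inter_subset_right (hi.compl.inter hN)]
    simp

lemma tv_nonneg_apply (s : SignedMeasure Ω) (hs : 0 ≤ s) {A : Set Ω} (hA : MeasurableSet A) :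
    s.totalVariation A = ENNReal.ofReal (s A) := by
  obtain ⟨i, hi, hspec⟩ := exists_jordan_set s
  obtain ⟨heq, h1, h2⟩ := hspec A hA
  have h3 : 0 ≤ s (iᶜ ∩ A) := by
    have := (VectorMeasure.le_iff.1 hs) _ (hi.compl.inter hA); simpa using this
  have h4 : s (iᶜ ∩ A) = 0 := le_antisymm h2 h3
  have h5 : s A = s (i ∩ A) + s (iᶜ ∩ A) := by
    rw [← VectorMeasure.of_union ?_ (hi.inter hA) (hi.compl.inter hA)]
    · rw [← Set.union_inter_distrib_right, Set.union_compl_self, Set.univ_inter]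
    · exact Disjoint.mono Set.inter_subset_left Set.inter_subset_left disjoint_compl_right
  rw [heq, h4, neg_zero, ENNReal.ofReal_zero, add_zero, h5, h4, add_zero]


lemma sm_split (s : SignedMeasure Ω) {A E : Set Ω} (hA : MeasurableSet A)
    (hE : MeasurableSet E) : s A = s (A ∩ E) + s (A ∩ Eᶜ) := by
  rw [← VectorMeasure.of_union ?_ (hA.inter hE) (hA.inter hE.compl), Set.inter_union_compl]
  exact Disjoint.mono Set.inter_subset_right Set.inter_subset_right disjoint_compl_right

lemma polar_mono {𝔓 : Set (Measure Ω)} {N N' : Set Ω} (h : N' ⊆ N) (hN : Polar 𝔓 N) :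
    Polar 𝔓 N' := fun P hP => measure_mono_null h (hN P hP)

lemma polar_empty (𝔓 : Set (Measure Ω)) : Polar 𝔓 ∅ := fun P _ => measure_empty

lemma polar_iUnion {𝔓 : Set (Measure Ω)} {f : ℕ → Set Ω} (h : ∀ n, Polar 𝔓 (f n)) :
    Polar 𝔓 (⋃ n, f n) := fun P hP => measure_iUnion_null fun n => h n P hP

lemma polar_union {𝔓 : Set (Measure Ω)} {N N' : Set Ω} (h : Polar 𝔓 N) (h' : Polar 𝔓 N') :
    Polar 𝔓 (N ∪ N') := fun P hP => measure_union_null (h P hP) (h' P hP)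

section CaC

variable {𝔓 : Set (Measure Ω)}

lemma caC_vanish {s : SignedMeasure Ω} (hs : s ∈ caC 𝔓) {N A : Set Ω} (hN : MeasurableSet N)
    (hpol : Polar 𝔓 N) (hAN : A ⊆ N) (hA : MeasurableSet A) : s A = 0 :=
  (tv_zero_iff s hN).1 (hs N hN hpol) A hAN hA

lemma zero_mem_caC : (0 : SignedMeasure Ω) ∈ caC 𝔓 := fun N hN _ => by
  rw [SignedMeasure.totalVariation_zero]; rfl

lemma add_mem_caC {s t : SignedMeasure Ω} (hs : s ∈ caC 𝔓) (ht : t ∈ caC 𝔓) :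
    s + t ∈ caC 𝔓 := by
  intro N hN hpol
  rw [tv_zero_iff _ hN]
  intro A hAN hA
  rw [VectorMeasure.add_apply, caC_vanish hs hN hpol hAN hA, caC_vanish ht hN hpol hAN hA,
    add_zero]

lemma smul_mem_caC (a : ℝ) {s : SignedMeasure Ω} (hs : s ∈ caC 𝔓) : a • s ∈ caC 𝔓 := by
  intro N hN hpol
  rw [tv_zero_iff _ hN]
  intro A hAN hA
  rw [VectorMeasure.smul_apply, caC_vanish hs hN hpol hAN hA, smul_zero]

lemma neg_mem_caC {s : SignedMeasure Ω} (hs : s ∈ caC 𝔓) : -s ∈ caC 𝔓 := fun N hN hpol => by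
  rw [SignedMeasure.totalVariation_neg]; exact hs N hN hpol

lemma restrict_mem_caC {s : SignedMeasure Ω} (hs : s ∈ caC 𝔓) {E : Set Ω}
    (hE : MeasurableSet E) : s.restrict E ∈ caC 𝔓 := by
  intro N hN hpol
  rw [tv_zero_iff _ hN]
  intro A hAN hA
  rw [VectorMeasure.restrict_apply _ hE hA]
  exact caC_vanish hs hN hpol (Set.Subset.trans Set.inter_subset_left hAN) (hA.inter hE)

lemma supported_zero : Supported 𝔓 (0 : Measure Ω) := by
  refine ⟨∅, MeasurableSet.empty, rfl, fun N _ _ => ?_⟩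
  rw [Set.inter_empty]
  exact polar_empty 𝔓

lemma supported_add {μ ν : Measure Ω} (hμ : Supported 𝔓 μ) (hν : Supported 𝔓 ν) :
    Supported 𝔓 (μ + ν) := by
  obtain ⟨S₁, hS₁, hS₁c, hS₁p⟩ := hμ
  obtain ⟨S₂, hS₂, hS₂c, hS₂p⟩ := hν
  refine ⟨S₁ ∪ S₂, hS₁.union hS₂, ?_, ?_⟩
  · rw [Measure.add_apply]
    rw [Set.compl_union]
    rw [measure_mono_null Set.inter_subset_left hS₁c,
      measure_mono_null Set.inter_subset_right hS₂c, add_zero]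
  · intro N hN h0
    rw [Measure.add_apply, add_eq_zero] at h0
    have h1 : Polar 𝔓 ((N ∩ (S₁ ∪ S₂)) ∩ S₁) := by
      refine hS₁p _ (hN.inter (hS₁.union hS₂)) ?_
      exact measure_mono_null Set.inter_subset_left h0.1
    have h2 : Polar 𝔓 ((N ∩ (S₁ ∪ S₂)) ∩ S₂) := by
      refine hS₂p _ (hN.inter (hS₁.union hS₂)) ?_
      exact measure_mono_null Set.inter_subset_left h0.2
    have heq : N ∩ (S₁ ∪ S₂) = (N ∩ (S₁ ∪ S₂)) ∩ S₁ ∪ (N ∩ (S₁ ∪ S₂)) ∩ S₂ := by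
      ext x; simp only [Set.mem_inter_iff, Set.mem_union]; tauto
    rw [heq]
    exact polar_union h1 h2
  
lemma supported_of_ac {μ ν : Measure Ω} [IsFiniteMeasure μ] [IsFiniteMeasure ν]
    (hac : μ ≪ ν) (hν : Supported 𝔓 ν) : Supported 𝔓 μ := by
  obtain ⟨S, hS, hSc, hSp⟩ := hν
  set g := μ.rnDeriv ν with hgdef
  have hg : Measurable g := Measure.measurable_rnDeriv μ ν
  have hμeq : ν.withDensity g = μ := Measure.withDensity_rnDeriv_eq μ ν hac
  have hgm : MeasurableSet {x | g x ≠ 0} := (hg (measurableSet_singleton 0)).compl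
  refine ⟨S ∩ {x | g x ≠ 0}, hS.inter hgm, ?_, ?_⟩
  · rw [Set.compl_inter]
    refine measure_union_null (hac hSc) ?_
    have : μ {x | g x ≠ 0}ᶜ = ∫⁻ x in {x | g x ≠ 0}ᶜ, g x ∂ν := by
      rw [← hμeq, withDensity_apply _ hgm.compl]
    rw [this, setLIntegral_congr_fun hgm.compl
      (fun x hx => not_not.mp hx), lintegral_zero]
  · intro N hN h0
    have hA : MeasurableSet (N ∩ (S ∩ {x | g x ≠ 0})) := hN.inter (hS.inter hgm)
    rw [← hμeq, withDensity_apply _ hA] at h0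
    rw [setLIntegral_eq_zero_iff hA hg] at h0
    have hν0 : ν (N ∩ (S ∩ {x | g x ≠ 0})) = 0 := by
      have h0' : ∀ᵐ x ∂ν, x ∈ N ∩ (S ∩ {x | g x ≠ 0}) → g x = 0 := h0
      rw [MeasureTheory.ae_iff] at h0'
      have h1 : ν ({x | ¬ (x ∈ N ∩ (S ∩ {x | g x ≠ 0}) → g x = 0)}) = 0 := h0'
      refine measure_mono_null ?_ h1
      intro x hx
      simp only [Set.mem_setOf_eq, Classical.not_imp]
      exact ⟨hx, hx.2.2⟩
    have hkey := hSp (N ∩ {x | g x ≠ 0}) (hN.inter hgm) ?_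
    · have : (N ∩ {x | g x ≠ 0}) ∩ S = N ∩ (S ∩ {x | g x ≠ 0}) := by
        ext x; simp [and_comm, and_assoc]; tauto
      rwa [this] at hkey
    · have : (N ∩ {x | g x ≠ 0}) ∩ S = N ∩ (S ∩ {x | g x ≠ 0}) := by
        ext x; simp [and_comm, and_assoc]; tauto
      rw [this]; exact hν0

end CaC

section ScaC

variable {𝔓 : Set (Measure Ω)}

lemma tv_ac_of_le {s t : SignedMeasure Ω}
    (h : ∀ N, MeasurableSet N → t.totalVariation N = 0 → s.totalVariation N = 0) :
    s.totalVariation ≪ t.totalVariation :=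
  Measure.AbsolutelyContinuous.mk h

lemma supported_of_tv_ac {s t : SignedMeasure Ω}
    (h : ∀ N, MeasurableSet N → t.totalVariation N = 0 → s.totalVariation N = 0)
    (ht : Supported 𝔓 t.totalVariation) : Supported 𝔓 s.totalVariation :=
  supported_of_ac (tv_ac_of_le h) ht

lemma zero_mem_scaC : (0 : SignedMeasure Ω) ∈ scaC 𝔓 := by
  refine ⟨zero_mem_caC, ?_⟩
  rw [SignedMeasure.totalVariation_zero]
  exact supported_zero

lemma add_mem_scaC {s t : SignedMeasure Ω} (hs : s ∈ scaC 𝔓) (ht : t ∈ scaC 𝔓) :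
    s + t ∈ scaC 𝔓 := by
  refine ⟨add_mem_caC hs.1 ht.1, ?_⟩
  have hac : ∀ N, MeasurableSet N →
      (s.totalVariation + t.totalVariation) N = 0 → (s + t).totalVariation N = 0 := by
    intro N hN h0
    rw [Measure.add_apply, add_eq_zero] at h0
    rw [tv_zero_iff _ hN]
    intro A hAN hA
    rw [VectorMeasure.add_apply, (tv_zero_iff s hN).1 h0.1 A hAN hA,
      (tv_zero_iff t hN).1 h0.2 A hAN hA, add_zero]
  exact supported_of_ac (Measure.AbsolutelyContinuous.mk hac)
    (supported_add hs.2 ht.2)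

lemma smul_mem_scaC (a : ℝ) {s : SignedMeasure Ω} (hs : s ∈ scaC 𝔓) : a • s ∈ scaC 𝔓 := by
  refine ⟨smul_mem_caC a hs.1, ?_⟩
  refine supported_of_tv_ac (fun N hN h0 => ?_) hs.2
  rw [tv_zero_iff _ hN]
  intro A hAN hA
  rw [VectorMeasure.smul_apply, (tv_zero_iff s hN).1 h0 A hAN hA, smul_zero]

lemma neg_mem_scaC {s : SignedMeasure Ω} (hs : s ∈ scaC 𝔓) : -s ∈ scaC 𝔓 := by
  refine ⟨neg_mem_caC hs.1, ?_⟩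
  rw [SignedMeasure.totalVariation_neg]
  exact hs.2

lemma sub_mem_scaC {s t : SignedMeasure Ω} (hs : s ∈ scaC 𝔓) (ht : t ∈ scaC 𝔓) :
    s - t ∈ scaC 𝔓 := by
  rw [sub_eq_add_neg]; exact add_mem_scaC hs (neg_mem_scaC ht)

lemma restrict_mem_scaC {s : SignedMeasure Ω} (hs : s ∈ scaC 𝔓) {E : Set Ω}
    (hE : MeasurableSet E) : s.restrict E ∈ scaC 𝔓 := by
  refine ⟨restrict_mem_caC hs.1 hE, ?_⟩
  refine supported_of_tv_ac (fun N hN h0 => ?_) hs.2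
  rw [tv_zero_iff _ hN]
  intro A hAN hA
  rw [VectorMeasure.restrict_apply _ hE hA]
  exact (tv_zero_iff s hN).1 h0 _ (Set.Subset.trans Set.inter_subset_left hAN) (hA.inter hE)

lemma solid_mem_scaC {s t : SignedMeasure Ω} (hs : t ∈ scaC 𝔓)
    (h : ∀ A, MeasurableSet A → s.totalVariation A ≤ t.totalVariation A) : s ∈ scaC 𝔓 := by
  refine ⟨fun N hN hpol => le_antisymm (le_trans (h N hN) (le_of_eq (hs.1 N hN hpol)))
    (zero_le), ?_⟩
  exact supported_of_tv_ac (fun N hN h0 => le_antisymm (le_trans (h N hN) (le_of_eq h0))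
    (zero_le)) hs.2

lemma toSignedMeasure_nonneg (μ : Measure Ω) [IsFiniteMeasure μ] : 0 ≤ μ.toSignedMeasure := by
  rw [VectorMeasure.le_iff]
  intro A hA
  rw [Measure.toSignedMeasure_apply_measurable hA]
  simpa using ENNReal.toReal_nonneg

lemma tv_toSignedMeasure (μ : Measure Ω) [IsFiniteMeasure μ] :
    μ.toSignedMeasure.totalVariation = μ := by
  ext A hA
  rw [tv_nonneg_apply _ (toSignedMeasure_nonneg μ) hA,
    Measure.toSignedMeasure_apply_measurable hA, measureReal_def, ENNReal.ofReal_toReal (measure_ne_top μ A)]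

/-- Hahn-type pairwise supremum construction. -/
lemma hahn_combo (s t : SignedMeasure Ω) :
    ∃ σ : SignedMeasure Ω, (∃ j, MeasurableSet j ∧ σ = t.restrict j + s.restrict jᶜ) ∧
      s ≤ σ ∧ t ≤ σ ∧ ∀ u : SignedMeasure Ω, s ≤ u → t ≤ u → σ ≤ u := by
  obtain ⟨j, hj, hj₂, hj₃⟩ := (t - s).exists_compl_positive_negative
  refine ⟨t.restrict j + s.restrict jᶜ, ⟨j, hj, rfl⟩, ?_, ?_, ?_⟩
  · rw [VectorMeasure.le_iff]
    intro A hA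
    rw [VectorMeasure.add_apply, VectorMeasure.restrict_apply _ hj hA,
      VectorMeasure.restrict_apply _ hj.compl hA, sm_split s hA hj]
    have := VectorMeasure.subset_le_of_restrict_le_restrict 0 (t - s) hj hj₂
      (Set.inter_subset_right (s := A))
    rw [VectorMeasure.zero_apply, VectorMeasure.sub_apply] at this
    linarith
  · rw [VectorMeasure.le_iff]
    intro A hA
    rw [VectorMeasure.add_apply, VectorMeasure.restrict_apply _ hj hA,
      VectorMeasure.restrict_apply _ hj.compl hA, sm_split t hA hj]
    have := VectorMeasure.subset_le_of_restrict_le_restrict (t - s) 0 hj.compl hj₃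
      (Set.inter_subset_right (s := A))
    rw [VectorMeasure.zero_apply, VectorMeasure.sub_apply] at this
    linarith
  · intro u hsu htu
    rw [VectorMeasure.le_iff]
    intro A hA
    rw [VectorMeasure.add_apply, VectorMeasure.restrict_apply _ hj hA,
      VectorMeasure.restrict_apply _ hj.compl hA, sm_split u hA hj]
    have h1 := (VectorMeasure.le_iff.1 htu) _ (hA.inter hj)
    have h2 := (VectorMeasure.le_iff.1 hsu) _ (hA.inter hj.compl)
    linarith

end ScaC

section SupClosed

variable {𝔓 : Set (Measure Ω)}

lemma combo_mem_scaC {s t σ : SignedMeasure Ω} (hs : s ∈ scaC 𝔓) (ht : t ∈ scaC 𝔓)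
    {j : Set Ω} (hj : MeasurableSet j) (hσ : σ = t.restrict j + s.restrict jᶜ) :
    σ ∈ scaC 𝔓 := by
  rw [hσ]
  exact add_mem_scaC (restrict_mem_scaC ht hj) (restrict_mem_scaC hs hj.compl)

lemma sup_closed (𝔓 : Set (Measure Ω)) (h𝔓 : 𝔓.Nonempty)
    (hprob : ∀ P ∈ 𝔓, IsProbabilityMeasure P)
    (M : Set (SignedMeasure Ω)) (hMcaC : caC 𝔓 ⊆ M)
    (hMres : ∀ s ∈ M, ∀ E : Set Ω, MeasurableSet E → s.restrict E ∈ M)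
    (hMadd : ∀ s ∈ M, ∀ t ∈ caC 𝔓, s + t ∈ M) :
    ∀ S ⊆ scaC 𝔓, ∀ m ∈ M,
      ((∀ ν ∈ S, ν ≤ m) ∧ ∀ η ∈ M, (∀ ν ∈ S, ν ≤ η) → m ≤ η) → m ∈ scaC 𝔓 := by
  intro S hS m hm hlub
  obtain ⟨hub, hleast⟩ := hlub
  rcases Set.eq_empty_or_nonempty S with rfl | ⟨ν₀, hν₀S⟩
  · exfalso
    obtain ⟨P₀, hP₀⟩ := h𝔓
    haveI := hprob P₀ hP₀
    have hP₀caC : P₀.toSignedMeasure ∈ caC 𝔓 := by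
      intro N hN hpol
      rw [tv_toSignedMeasure]
      exact hpol P₀ hP₀
    have h := hleast (m + -P₀.toSignedMeasure) (hMadd m hm _ (neg_mem_caC hP₀caC))
      (fun ν hν => absurd hν (Set.notMem_empty ν))
    have h2 := (VectorMeasure.le_iff.1 h) Set.univ MeasurableSet.univ
    rw [VectorMeasure.add_apply, VectorMeasure.neg_apply,
      Measure.toSignedMeasure_apply_measurable MeasurableSet.univ, measureReal_def] at h2
    have h3 : (P₀ Set.univ).toReal = 1 := by simp
    linarith
  have hν₀ : ν₀ ∈ scaC 𝔓 := hS hν₀S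
  -- Step 1 : m ∈ caC
  have hmcaC : m ∈ caC 𝔓 := by
    intro N hN hpol
    rw [tv_zero_iff _ hN]
    intro A hAN hA
    have hηub : ∀ ν ∈ S, ν ≤ m.restrict Nᶜ := by
      intro ν hν
      rw [VectorMeasure.le_iff]
      intro A' hA'
      rw [VectorMeasure.restrict_apply _ hN.compl hA']
      have hsplit := sm_split ν hA' hN.compl
      rw [compl_compl] at hsplit
      have h1 : ν (A' ∩ N) = 0 :=
        caC_vanish (hS hν).1 hN hpol Set.inter_subset_right (hA'.inter hN)
      have h2 : ν (A' ∩ Nᶜ) ≤ m (A' ∩ Nᶜ) :=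
        (VectorMeasure.le_iff.1 (hub ν hν)) _ (hA'.inter hN.compl)
      linarith
    have hη := hleast (m.restrict Nᶜ) (hMres m hm _ hN.compl) hηub
    have h1 : m A ≤ (m.restrict Nᶜ) A := (VectorMeasure.le_iff.1 hη) A hA
    have hcap : A ∩ Nᶜ = ∅ := by
      rw [Set.eq_empty_iff_forall_notMem]
      exact fun x hx => hx.2 (hAN hx.1)
    rw [VectorMeasure.restrict_apply _ hN.compl hA, hcap, VectorMeasure.empty] at h1
    have h2 : ν₀ A ≤ m A := (VectorMeasure.le_iff.1 (hub ν₀ hν₀S)) A hA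
    have h3 : ν₀ A = 0 := caC_vanish hν₀.1 hN hpol hAN hA
    linarith
  set m' : SignedMeasure Ω := m - ν₀ with hm'def
  have hm'app : ∀ A : Set Ω, m' A = m A - ν₀ A := fun A => VectorMeasure.sub_apply m ν₀ A
  have hm'0 : (0 : SignedMeasure Ω) ≤ m' := by
    rw [VectorMeasure.le_iff]
    intro A hA
    rw [VectorMeasure.zero_apply, hm'app]
    have := (VectorMeasure.le_iff.1 (hub ν₀ hν₀S)) A hA
    linarith
  have hν₀caC : ν₀ ∈ caC 𝔓 := hν₀.1
  have hm'M : m' ∈ M := by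
    rw [hm'def, sub_eq_add_neg]
    exact hMadd m hm _ (neg_mem_caC hν₀caC)
  have hm'caC : m' ∈ caC 𝔓 := by
    rw [hm'def, sub_eq_add_neg]
    exact add_mem_caC hmcaC (neg_mem_caC hν₀caC)
  set T : Set (SignedMeasure Ω) := {σ | σ ∈ scaC 𝔓 ∧ 0 ≤ σ ∧ σ ≤ m'} with hTdef
  have h0T : (0 : SignedMeasure Ω) ∈ T := ⟨zero_mem_scaC, le_refl 0, hm'0⟩
  -- least upper bound property of m' over T
  have hleast' : ∀ η ∈ M, (∀ σ ∈ T, σ ≤ η) → m' ≤ η := by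
    intro η hη hubη
    have hS' : ∀ ν ∈ S, ν ≤ η + ν₀ := by
      intro ν hν
      have hδ : ν - ν₀ ∈ scaC 𝔓 := sub_mem_scaC (hS hν) hν₀
      obtain ⟨ρ, ⟨j, hj, hρeq⟩, hδρ, h0ρ, hmin⟩ := hahn_combo (ν - ν₀) 0
      have hδm' : ν - ν₀ ≤ m' := by
        rw [VectorMeasure.le_iff]
        intro A hA
        rw [VectorMeasure.sub_apply, hm'app]
        have := (VectorMeasure.le_iff.1 (hub ν hν)) A hA
        linarith
      have hρT : ρ ∈ T := ⟨combo_mem_scaC hδ zero_mem_scaC hj hρeq, h0ρ,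
        hmin m' hδm' hm'0⟩
      have h1 : ν - ν₀ ≤ η := le_trans hδρ (hubη ρ hρT)
      rw [VectorMeasure.le_iff]
      intro A hA
      have := (VectorMeasure.le_iff.1 h1) A hA
      rw [VectorMeasure.sub_apply] at this
      rw [VectorMeasure.add_apply]
      linarith
    have := hleast (η + ν₀) (hMadd η hη _ hν₀caC) hS'
    rw [VectorMeasure.le_iff]
    intro A hA
    have h2 := (VectorMeasure.le_iff.1 this) A hA
    rw [VectorMeasure.add_apply] at h2
    rw [hm'app]
    linarith
  -- approximating sequence
  set V : Set ℝ := (fun σ : SignedMeasure Ω => σ Set.univ) '' T with hVdef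
  have hVne : V.Nonempty := ⟨0, 0, h0T, rfl⟩
  have hVbdd : BddAbove V := by
    refine ⟨m' Set.univ, ?_⟩
    rintro x ⟨σ, hσ, rfl⟩
    exact (VectorMeasure.le_iff.1 hσ.2.2) _ MeasurableSet.univ
  set sstar := sSup V with hsstar
  have hchoice : ∀ n : ℕ, ∃ σ, σ ∈ T ∧ sstar - 1/(n+1) < σ Set.univ := by
    intro n
    have hlt : sstar - 1/(n+1:ℝ) < sstar := by
      have : (0:ℝ) < 1/(n+1:ℝ) := by positivity
      linarith
    obtain ⟨x, hxV, hx⟩ := exists_lt_of_lt_csSup hVne hlt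
    obtain ⟨σ, hσ, rfl⟩ := hxV
    exact ⟨σ, hσ, hx⟩
  choose σseq hσseqT hσseqlt using hchoice
  have hsupp : ∀ n, Supported 𝔓 (σseq n).totalVariation := fun n => ((hσseqT n).1).2
  choose Sn hSn using hsupp
  have hSnm : ∀ n, MeasurableSet (Sn n) := fun n => (hSn n).1
  have hSnc : ∀ n, (σseq n).totalVariation (Sn n)ᶜ = 0 := fun n => (hSn n).2.1
  have hSnp := fun n => (hSn n).2.2
  set S₀ : Set Ω := ⋃ n, Sn n with hS₀def
  have hS₀m : MeasurableSet S₀ := MeasurableSet.iUnion hSnm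
  -- step 4 : elements of T vanish off S₀
  have hvanish : ∀ σ ∈ T, ∀ A, A ⊆ S₀ᶜ → MeasurableSet A → σ A = 0 := by
    intro σ hσ A hAS hA
    have hge : (0:ℝ) ≤ σ A := by
      have := (VectorMeasure.le_iff.1 hσ.2.1) A hA
      simpa using this
    have hle : ∀ n : ℕ, σ A ≤ 1/(n+1) := by
      intro n
      obtain ⟨ρ, ⟨j, hj, hρeq⟩, hσρ, hσnρ, hmin⟩ := hahn_combo σ (σseq n)
      have hρT : ρ ∈ T := ⟨combo_mem_scaC hσ.1 (hσseqT n).1 hj hρeq,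
        le_trans hσ.2.1 hσρ, hmin m' hσ.2.2 (hσseqT n).2.2⟩
      have hρle : ρ Set.univ ≤ sstar := le_csSup hVbdd ⟨ρ, hρT, rfl⟩
      have hsplitρ : ρ Set.univ = ρ A + ρ Aᶜ := by
        have := sm_split ρ MeasurableSet.univ hA
        simpa [Set.univ_inter] using this
      have hσn0 : σseq n A = 0 := by
        refine (tv_zero_iff _ (hSnm n).compl).1 (hSnc n) A ?_ hA
        exact Set.Subset.trans hAS (Set.compl_subset_compl.mpr (Set.subset_iUnion Sn n))
      have hsplitσn : σseq n Set.univ = σseq n A + σseq n Aᶜ := by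
        have := sm_split (σseq n) MeasurableSet.univ hA
        simpa [Set.univ_inter] using this
      have h1 : σ A ≤ ρ A := (VectorMeasure.le_iff.1 hσρ) A hA
      have h2 : σseq n Aᶜ ≤ ρ Aᶜ := (VectorMeasure.le_iff.1 hσnρ) Aᶜ hA.compl
      have h3 := hσseqlt n
      linarith
    have hle0 : σ A ≤ 0 := by
      by_contra hcon
      push_neg at hcon
      obtain ⟨n, hn⟩ := exists_nat_one_div_lt hcon
      have := hle n
      linarith
    linarith
  -- step 5 : m' vanishes off S₀
  have hubrestrict : ∀ σ ∈ T, σ ≤ m'.restrict S₀ := by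
    intro σ hσ
    rw [VectorMeasure.le_iff]
    intro A hA
    rw [VectorMeasure.restrict_apply _ hS₀m hA]
    have hsplit := sm_split σ hA hS₀m
    have h1 : σ (A ∩ S₀ᶜ) = 0 :=
      hvanish σ hσ _ Set.inter_subset_right (hA.inter hS₀m.compl)
    have h2 : σ (A ∩ S₀) ≤ m' (A ∩ S₀) :=
      (VectorMeasure.le_iff.1 hσ.2.2) _ (hA.inter hS₀m)
    linarith
  have hm'le := hleast' (m'.restrict S₀) (hMres m' hm'M _ hS₀m) hubrestrict
  have hm'Sc : m'.totalVariation S₀ᶜ = 0 := by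
    rw [tv_zero_iff _ hS₀m.compl]
    intro A hAS hA
    have h1 : m' A ≤ (m'.restrict S₀) A := (VectorMeasure.le_iff.1 hm'le) A hA
    have hcap : A ∩ S₀ = ∅ := by
      rw [Set.eq_empty_iff_forall_notMem]
      exact fun x hx => (hAS hx.1) hx.2
    rw [VectorMeasure.restrict_apply _ hS₀m hA, hcap, VectorMeasure.empty] at h1
    have h2 : (0:ℝ) ≤ m' A := by
      have := (VectorMeasure.le_iff.1 hm'0) A hA
      simpa using this
    linarith
  -- step 6 : support property
  have hpropS : ∀ N : Set Ω, MeasurableSet N → m'.totalVariation (N ∩ S₀) = 0 →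
      Polar 𝔓 (N ∩ S₀) := by
    intro N hN h0
    have hcover : N ∩ S₀ = ⋃ n, (N ∩ S₀) ∩ Sn n := by
      rw [← Set.inter_iUnion, ← hS₀def, Set.inter_assoc, Set.inter_self]
    rw [hcover]
    refine polar_iUnion (fun n => ?_)
    refine hSnp n (N ∩ S₀) (hN.inter hS₀m) ?_
    rw [tv_zero_iff _ ((hN.inter hS₀m).inter (hSnm n))]
    intro A hA' hAm
    have hAsub : A ⊆ N ∩ S₀ := Set.Subset.trans hA' Set.inter_subset_left
    have h1 : m' A = 0 := (tv_zero_iff _ (hN.inter hS₀m)).1 h0 A hAsub hAm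
    have h2 : σseq n A ≤ m' A := (VectorMeasure.le_iff.1 (hσseqT n).2.2) A hAm
    have h3 : (0:ℝ) ≤ σseq n A := by
      have := (VectorMeasure.le_iff.1 (hσseqT n).2.1) A hAm
      simpa using this
    linarith
  have hm'scaC : m' ∈ scaC 𝔓 := ⟨hm'caC, S₀, hS₀m, hm'Sc, hpropS⟩
  have hmeq : m = m' + ν₀ := by rw [hm'def, sub_add_cancel]
  rw [hmeq]
  exact add_mem_scaC hm'scaC hν₀

end SupClosed

section Density

open scoped ENNReal

lemma exists_density_sets (lam Q : Measure Ω) [IsFiniteMeasure lam] [IsFiniteMeasure Q] :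
    ∃ E : ℕ → Set Ω, (∀ n, MeasurableSet (E n)) ∧ (Monotone E) ∧
      (∀ n, ∀ B, B ⊆ E n → MeasurableSet B → lam B ≤ n * Q B) ∧
      (∀ B, B ⊆ (⋃ n, E n)ᶜ → MeasurableSet B → Q B = 0) := by
  set ν : Measure Ω := lam + Q with hν
  set g : Ω → ℝ≥0∞ := lam.rnDeriv ν with hg
  set h : Ω → ℝ≥0∞ := Q.rnDeriv ν with hh
  have hgm : Measurable g := Measure.measurable_rnDeriv _ _
  have hhm : Measurable h := Measure.measurable_rnDeriv _ _
  have hlamac : lam ≪ ν := Measure.absolutelyContinuous_of_le (Measure.le_add_right le_rfl)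
  have hQac : Q ≪ ν := Measure.absolutelyContinuous_of_le (Measure.le_add_left le_rfl)
  have hlameq : ν.withDensity g = lam := Measure.withDensity_rnDeriv_eq _ _ hlamac
  have hQeq : ν.withDensity h = Q := Measure.withDensity_rnDeriv_eq _ _ hQac
  refine ⟨fun n => {x | g x ≤ n * h x}, fun n => measurableSet_le hgm (hhm.const_mul (n : ℝ≥0∞)), ?_, ?_, ?_⟩
  · intro n m hnm x hx
    have hx' : g x ≤ (n : ℝ≥0∞) * h x := hx
    have hc : (n : ℝ≥0∞) ≤ (m : ℝ≥0∞) := by exact_mod_cast hnm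
    exact le_trans hx' (mul_le_mul_left hc _)
  · intro n B hB hBm
    have h1 : lam B = ∫⁻ x in B, g x ∂ν := by rw [← hlameq, withDensity_apply _ hBm]
    have h2 : Q B = ∫⁻ x in B, h x ∂ν := by rw [← hQeq, withDensity_apply _ hBm]
    rw [h1, h2, ← lintegral_const_mul _ hhm]
    exact setLIntegral_mono' hBm (fun x hx => hB hx)
  · intro B hB hBm
    have hgfin : ν {x | g x = ∞} = 0 := by
      have := Measure.rnDeriv_lt_top lam ν
      rw [MeasureTheory.ae_iff] at this
      refine measure_mono_null ?_ this
      intro x hx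
      simp only [Set.mem_setOf_eq, not_lt, top_le_iff]
      exact hx
    have hsub : B ∩ {x | h x ≠ 0} ⊆ {x | g x = ∞} := by
      rintro x ⟨hxB, hxh⟩
      by_contra hgx
      have hxE := hB hxB
      simp only [Set.mem_compl_iff, Set.mem_iUnion, not_exists, Set.mem_setOf_eq] at hxE
      rcases eq_or_ne (h x) ∞ with htop | hfin
      · exact hxE 1 (by rw [htop]; simp)
      · have hgx' : g x ≠ ∞ := hgx
        have hdiv : g x / h x ≠ ∞ := (ENNReal.div_lt_top hgx' hxh).ne
        obtain ⟨n, hn⟩ := ENNReal.exists_nat_gt hdiv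
        refine hxE n (le_of_lt ?_)
        rwa [ENNReal.div_lt_iff (Or.inl hxh) (Or.inl hfin)] at hn
    have hQ1 : Q (B ∩ {x | h x ≠ 0}) = 0 :=
      hQac (measure_mono_null hsub hgfin)
    have hQ2 : Q (B ∩ {x | h x = 0}) = 0 := by
      have hm2 : MeasurableSet (B ∩ {x | h x = 0}) := hBm.inter (hhm (measurableSet_singleton 0))
      rw [← hQeq, withDensity_apply _ hm2,
        setLIntegral_congr_fun hm2 (fun x hx => hx.2), lintegral_zero]
    have : B = (B ∩ {x | h x ≠ 0}) ∪ (B ∩ {x | h x = 0}) := by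
      ext x; by_cases hx : h x = 0 <;> simp [hx]
    rw [this]
    exact measure_union_null hQ1 hQ2

end Density

section Generators

open scoped ENNReal

lemma supported_of_density {𝔓 𝔔 : Set (Measure Ω)} (hequiv : PolarEquiv 𝔓 𝔔)
    (μbar : Measure Ω) {Q : Measure Ω} (hQ𝔔 : Q ∈ 𝔔)
    (hdens : ∀ Q' ∈ 𝔔, ∃ f : Ω → ℝ≥0∞, Measurable f ∧ Q' = μbar.withDensity f) :
    Supported 𝔓 Q := by
  obtain ⟨f, hf, hQeq⟩ := hdens Q hQ𝔔
  have hfm : MeasurableSet {x | f x ≠ 0} := (hf (measurableSet_singleton 0)).compl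
  refine ⟨{x | f x ≠ 0}, hfm, ?_, ?_⟩
  · rw [hQeq, withDensity_apply _ hfm.compl,
      setLIntegral_congr_fun hfm.compl (fun x hx => not_not.mp hx),
      lintegral_zero]
  · intro N hN h0
    have hA : MeasurableSet (N ∩ {x | f x ≠ 0}) := hN.inter hfm
    rw [hQeq, withDensity_apply _ hA, setLIntegral_eq_zero_iff hA hf] at h0
    have h0' : ∀ᵐ x ∂μbar, x ∈ N ∩ {x | f x ≠ 0} → f x = 0 := h0
    rw [MeasureTheory.ae_iff] at h0'
    have hμ0 : μbar (N ∩ {x | f x ≠ 0}) = 0 := by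
      refine measure_mono_null ?_ h0'
      intro x hx
      simp only [Set.mem_setOf_eq, Classical.not_imp]
      exact ⟨hx, hx.2⟩
    refine (hequiv _ hA).mpr ?_
    intro Q' hQ'
    obtain ⟨f', hf', hQ'eq⟩ := hdens Q' hQ'
    rw [hQ'eq, withDensity_apply _ hA]
    exact setLIntegral_measure_zero _ _ hμ0

lemma toSgn_subset_scaC {𝔓 𝔔 : Set (Measure Ω)} (hQprob : ∀ Q ∈ 𝔔, IsProbabilityMeasure Q)
    (hequiv : PolarEquiv 𝔓 𝔔) (μbar : Measure Ω)
    (hdens : ∀ Q' ∈ 𝔔, ∃ f : Ω → ℝ≥0∞, Measurable f ∧ Q' = μbar.withDensity f) :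
    toSgn 𝔔 ⊆ scaC 𝔓 := by
  rintro s ⟨Q, hQ, hsQ⟩
  haveI := hQprob Q hQ
  have hs : s = Q.toSignedMeasure := by
    refine VectorMeasure.ext (fun A hA => ?_)
    rw [hsQ A hA, Measure.toSignedMeasure_apply_measurable hA, measureReal_def]
  constructor
  · intro N hN hpol
    rw [hs, tv_toSignedMeasure]
    exact ((hequiv N hN).mp hpol) Q hQ
  · rw [hs, tv_toSignedMeasure]
    exact supported_of_density hequiv μbar hQ hdens

lemma vm_finset_sum_apply {ι : Type*} (s : Finset ι) (v : ι → SignedMeasure Ω) (A : Set Ω) :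
    (∑ i ∈ s, v i) A = ∑ i ∈ s, v i A := by
  classical
  induction s using Finset.induction_on with
  | empty => simp [VectorMeasure.zero_apply]
  | insert _ _ hnot ih =>
    rw [Finset.sum_insert hnot, Finset.sum_insert hnot, VectorMeasure.add_apply, ih]

end Generators

section Minimality

open scoped ENNReal

lemma scaC_subset_band {𝔓 𝔔 : Set (Measure Ω)} (h𝔔 : 𝔔.Nonempty)
    (hQprob : ∀ Q ∈ 𝔔, IsProbabilityMeasure Q) (hequiv : PolarEquiv 𝔓 𝔔)
    (μbar : Measure Ω)
    (hdens : ∀ Q' ∈ 𝔔, ∃ f : Ω → ℝ≥0∞, Measurable f ∧ Q' = μbar.withDensity f)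
    (M B' : Set (SignedMeasure Ω)) (hMcaC : caC 𝔓 ⊆ M)
    (hMres : ∀ s ∈ M, ∀ E : Set Ω, MeasurableSet E → s.restrict E ∈ M)
    (hB' : IsBandIn M B') (hG : toSgn 𝔔 ⊆ B') :
    scaC 𝔓 ⊆ B' := by
  obtain ⟨hB'M, hB'0, hB'add, hB'smul, hB'solid, hB'sup⟩ := hB'
  intro m hm
  set lam : Measure Ω := m.totalVariation with hlam
  obtain ⟨Slam, hSlamm, hSlamc, hSlamp⟩ := hm.2
  set lams : SignedMeasure Ω := lam.toSignedMeasure with hlams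
  have hlamnonneg : (0 : SignedMeasure Ω) ≤ lams := toSignedMeasure_nonneg lam
  have hlams_apply : ∀ A : Set Ω, MeasurableSet A → lams A = (lam A).toReal := fun A hA =>
    Measure.toSignedMeasure_apply_measurable hA
  have hlamsCaC : lams ∈ caC 𝔓 := by
    intro N hN hpol
    rw [hlams, tv_toSignedMeasure]
    exact hm.1 N hN hpol
  have hlamsM : lams ∈ M := hMcaC hlamsCaC
  have hE0 : ∀ Q : Measure Ω, Q ∈ 𝔔 → ∃ E : ℕ → Set Ω, (∀ n, MeasurableSet (E n)) ∧
      (Monotone E) ∧ (∀ n, ∀ B, B ⊆ E n → MeasurableSet B → lam B ≤ n * Q B) ∧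
      (∀ B, B ⊆ (⋃ n, E n)ᶜ → MeasurableSet B → Q B = 0) := by
    intro Q hQ
    haveI := hQprob Q hQ
    exact exists_density_sets lam Q
  choose! E hEm hEmono hEbound hEcompl using hE0
  set R : Set (SignedMeasure Ω) := {ρ | ρ ∈ M ∧ 0 ≤ ρ ∧ ρ ≤ lams ∧
    ∃ (n k : ℕ) (Qs : Fin k → Measure Ω), (∀ i, Qs i ∈ 𝔔) ∧
      ∀ A : Set Ω, MeasurableSet A → ρ A ≤ n * ∑ i, ((Qs i) A).toReal} with hRdef
  have hRB' : R ⊆ B' := by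
    rintro ρ ⟨hρM, hρ0, hρle, n, k, Qs, hQs, hbound⟩
    haveI : ∀ i, IsProbabilityMeasure (Qs i) := fun i => hQprob _ (hQs i)
    set ζ : SignedMeasure Ω := (n : ℝ) • ∑ i, (Qs i).toSignedMeasure with hζ
    have hζB' : ζ ∈ B' := by
      refine hB'smul _ _ ?_
      refine Finset.sum_induction _ (· ∈ B') (fun a b ha hb => hB'add a ha b hb) hB'0 ?_
      intro i _
      refine hG ⟨Qs i, hQs i, fun A hA => ?_⟩
      exact Measure.toSignedMeasure_apply_measurable hA
    have hζ_apply : ∀ A : Set Ω, MeasurableSet A → ζ A = n * ∑ i, ((Qs i) A).toReal := by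
      intro A hA
      rw [hζ, VectorMeasure.smul_apply, vm_finset_sum_apply]
      simp only [smul_eq_mul]
      congr 1
      refine Finset.sum_congr rfl (fun i _ => ?_)
      exact Measure.toSignedMeasure_apply_measurable hA
    have hζ0 : (0 : SignedMeasure Ω) ≤ ζ := by
      rw [VectorMeasure.le_iff]
      intro A hA
      rw [VectorMeasure.zero_apply, hζ_apply A hA]
      positivity
    refine hB'solid ρ hρM ζ hζB' (fun A hA => ?_)
    rw [tv_nonneg_apply ρ hρ0 hA, tv_nonneg_apply ζ hζ0 hA]
    refine ENNReal.ofReal_le_ofReal ?_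
    rw [hζ_apply A hA]
    exact hbound A hA
  have hub : ∀ ρ ∈ R, ρ ≤ lams := fun ρ hρ => hρ.2.2.1
  have hleast : ∀ η, (∀ ρ ∈ R, ρ ≤ η) → lams ≤ η := by
    intro η hubη
    have h0R : (0 : SignedMeasure Ω) ∈ R := by
      refine ⟨hMcaC zero_mem_caC, le_refl _, hlamnonneg, 0, 0, Fin.elim0, fun i => i.elim0,
        fun A hA => ?_⟩
      simp [VectorMeasure.zero_apply]
    have hη0 : (0 : SignedMeasure Ω) ≤ η := hubη 0 h0R
    rw [VectorMeasure.le_iff]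
    intro A hA
    rw [hlams_apply A hA]
    have hηA0 : (0:ℝ) ≤ η A := by
      have := (VectorMeasure.le_iff.1 hη0) A hA; simpa using this
    suffices hkey : lam A ≤ ENNReal.ofReal (η A) by
      have h1 := ENNReal.toReal_mono ENNReal.ofReal_ne_top hkey
      rwa [ENNReal.toReal_ofReal hηA0] at h1
    obtain ⟨Q₀, hQ₀⟩ := h𝔔
    set VV : Set ℝ := {x | ∃ w : ℕ → Measure Ω, (∀ j, w j ∈ 𝔔) ∧
      x = (lam (A ∩ ⋃ j, ⋃ n, E (w j) n)).toReal} with hVVdef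
    have hVVne : VV.Nonempty := ⟨_, fun _ => Q₀, fun _ => hQ₀, rfl⟩
    have hVVbdd : BddAbove VV := by
      refine ⟨(lam A).toReal, ?_⟩
      rintro x ⟨w, hw, rfl⟩
      exact ENNReal.toReal_mono (measure_ne_top _ _) (measure_mono Set.inter_subset_left)
    set cstar := sSup VV with hcstar
    have hchoice : ∀ p : ℕ, ∃ w : ℕ → Measure Ω, (∀ j, w j ∈ 𝔔) ∧
        cstar - 1/(p+1) < (lam (A ∩ ⋃ j, ⋃ n, E (w j) n)).toReal := by
      intro p
      have hlt : cstar - 1/(p+1:ℝ) < cstar := by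
        have : (0:ℝ) < 1/(p+1:ℝ) := by positivity
        linarith
      obtain ⟨x, hxV, hx⟩ := exists_lt_of_lt_csSup hVVne hlt
      obtain ⟨w, hw, rfl⟩ := hxV
      exact ⟨w, hw, hx⟩
    choose wseq hwseq hwlt using hchoice
    set e : ℕ ≃ ℕ × ℕ := (Denumerable.eqv (ℕ × ℕ)).symm with he
    set wflat : ℕ → Measure Ω := fun j => wseq (e j).1 (e j).2 with hwflat
    have hwflat𝔔 : ∀ j, wflat j ∈ 𝔔 := fun j => hwseq _ _
    set W : Set Ω := ⋃ j, ⋃ n, E (wflat j) n with hW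
    have hUQm : ∀ Q ∈ 𝔔, MeasurableSet (⋃ n, E Q n) := fun Q hQ =>
      MeasurableSet.iUnion (fun n => hEm Q hQ n)
    have hWm : MeasurableSet W := MeasurableSet.iUnion (fun j => hUQm _ (hwflat𝔔 j))
    have hWU : ∀ p, (⋃ j, ⋃ n, E (wseq p j) n) ⊆ W := by
      intro p x hx
      rw [Set.mem_iUnion] at hx
      obtain ⟨j, hx⟩ := hx
      rw [hW, Set.mem_iUnion]
      refine ⟨e.symm (p, j), ?_⟩
      rw [hwflat]
      simp only [Equiv.apply_symm_apply]
      exact hx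
    have hWlower : cstar ≤ (lam (A ∩ W)).toReal := by
      by_contra hcon
      push_neg at hcon
      have hpos : (0:ℝ) < cstar - (lam (A ∩ W)).toReal := by linarith
      obtain ⟨p, hp⟩ := exists_nat_one_div_lt hpos
      have h1 := hwlt p
      have h2 : (lam (A ∩ ⋃ j, ⋃ n, E (wseq p j) n)).toReal ≤ (lam (A ∩ W)).toReal :=
        ENNReal.toReal_mono (measure_ne_top _ _)
          (measure_mono (Set.inter_subset_inter_right _ (hWU p)))
      linarith
    -- each U Q adds nothing
    have hUQW : ∀ Q ∈ 𝔔, lam ((A ∩ ⋃ n, E Q n) \ W) = 0 := by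
      intro Q hQ
      set w' : ℕ → Measure Ω := fun j => Nat.casesOn j Q (fun j' => wflat j') with hw'
      have hw'𝔔 : ∀ j, w' j ∈ 𝔔 := by
        intro j
        cases j with
        | zero => exact hQ
        | succ j' => exact hwflat𝔔 j'
      have hw'union : (⋃ j, ⋃ n, E (w' j) n) = (⋃ n, E Q n) ∪ W := by
        ext x
        simp only [Set.mem_iUnion, Set.mem_union, hW]
        constructor
        · rintro ⟨j, n, hx⟩
          cases j with
          | zero => exact Or.inl ⟨n, hx⟩
          | succ j' => exact Or.inr ⟨j', n, hx⟩
        · rintro (⟨n, hx⟩ | ⟨j, n, hx⟩)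
          · exact ⟨0, n, hx⟩
          · exact ⟨j + 1, n, hx⟩
      have hmem : (lam (A ∩ ((⋃ n, E Q n) ∪ W))).toReal ∈ VV := by
        refine ⟨w', hw'𝔔, ?_⟩
        rw [hw'union]
      have hle : (lam (A ∩ ((⋃ n, E Q n) ∪ W))).toReal ≤ cstar := le_csSup hVVbdd hmem
      have hsplit : A ∩ ((⋃ n, E Q n) ∪ W) = (A ∩ W) ∪ ((A ∩ ⋃ n, E Q n) \ W) := by
        ext x
        simp only [Set.mem_inter_iff, Set.mem_union, Set.mem_diff]
        tauto
      have hmeas2 : MeasurableSet ((A ∩ ⋃ n, E Q n) \ W) :=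
        ((hA.inter (hUQm Q hQ)).diff hWm)
      have hdisj : Disjoint (A ∩ W) ((A ∩ ⋃ n, E Q n) \ W) := by
        rw [Set.disjoint_left]
        rintro x ⟨-, hxW⟩ ⟨-, hxnW⟩
        exact hxnW hxW
      have haddeq : lam (A ∩ ((⋃ n, E Q n) ∪ W)) =
          lam (A ∩ W) + lam ((A ∩ ⋃ n, E Q n) \ W) := by
        rw [hsplit, measure_union hdisj hmeas2]
      have htr : (lam (A ∩ W)).toReal + (lam ((A ∩ ⋃ n, E Q n) \ W)).toReal ≤ cstar := by
        rw [← ENNReal.toReal_add (measure_ne_top _ _) (measure_ne_top _ _), ← haddeq]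
        exact hle
      have hge : (0:ℝ) ≤ (lam ((A ∩ ⋃ n, E Q n) \ W)).toReal := ENNReal.toReal_nonneg
      have : (lam ((A ∩ ⋃ n, E Q n) \ W)).toReal = 0 := by linarith
      rw [ENNReal.toReal_eq_zero_iff] at this
      rcases this with h | h
      · exact h
      · exact absurd h (measure_ne_top _ _)
    -- the remainder A \ W is polar ∩ Slam, hence lam-null
    have hDnull : lam (A \ W) = 0 := by
      set X : Set Ω := (A \ W) ∩ Slam with hX
      have hXm : MeasurableSet X := (hA.diff hWm).inter hSlamm
      have hQX : ∀ Q ∈ 𝔔, Q X = 0 := by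
        intro Q hQ
        have hXsplit : X = (X ∩ ⋃ n, E Q n) ∪ (X \ ⋃ n, E Q n) := by
          ext x
          simp only [Set.mem_inter_iff, Set.mem_union, Set.mem_diff]
          tauto
        refine hXsplit ▸ measure_union_null ?_ ?_
        · have hN₁ : MeasurableSet ((A \ W) ∩ ⋃ n, E Q n) := (hA.diff hWm).inter (hUQm Q hQ)
          have hlamN₁ : lam (((A \ W) ∩ ⋃ n, E Q n) ∩ Slam) = 0 := by
            refine measure_mono_null ?_ (hUQW Q hQ)
            intro x hx
            exact ⟨⟨hx.1.1.1, hx.1.2⟩, hx.1.1.2⟩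
          have hpol : Polar 𝔓 (((A \ W) ∩ ⋃ n, E Q n) ∩ Slam) := hSlamp _ hN₁ hlamN₁
          have hpol𝔔 : Polar 𝔔 (((A \ W) ∩ ⋃ n, E Q n) ∩ Slam) :=
            (hequiv _ (hN₁.inter hSlamm)).mp hpol
          have hXeq : X ∩ ⋃ n, E Q n = ((A \ W) ∩ ⋃ n, E Q n) ∩ Slam := by
            ext x
            simp only [hX, Set.mem_inter_iff]
            tauto
          rw [hXeq]
          exact hpol𝔔 Q hQ
        · exact hEcompl Q hQ _ (fun x hx => hx.2) (hXm.diff (hUQm Q hQ))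
      have hpolX : Polar 𝔓 X := (hequiv X hXm).mpr hQX
      have hlamX : lam X = 0 := hm.1 X hXm hpolX
      have : A \ W ⊆ X ∪ Slamᶜ := by
        intro x hx
        by_cases hxS : x ∈ Slam
        · exact Or.inl ⟨hx, hxS⟩
        · exact Or.inr hxS
      refine measure_mono_null this (measure_union_null hlamX hSlamc)
    have hlamA : lam A = lam (A ∩ W) := by
      have := measure_inter_add_diff (μ := lam) A hWm
      rw [hDnull, add_zero] at this
      exact this.symm
    rw [hlamA]
    -- approximate A ∩ W from inside by elements of R
    set PP : ℕ → Set Ω := fun K => ⋃ j ∈ Finset.range K, ⋃ n, E (wflat j) n with hPP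
    have hPPm : ∀ K, MeasurableSet (PP K) := fun K =>
      MeasurableSet.biUnion (Finset.range K).countable_toSet
        (fun j _ => hUQm _ (hwflat𝔔 j))
    have hmono1 : Monotone (fun K => A ∩ PP K) := by
      intro K K' hKK' x hx
      refine ⟨hx.1, ?_⟩
      have := hx.2
      simp only [hPP, Set.mem_iUnion, Finset.mem_range] at this ⊢
      obtain ⟨j, hj, hxj⟩ := this
      exact ⟨j, lt_of_lt_of_le hj hKK', hxj⟩
    have hPPunion : (⋃ K, A ∩ PP K) = A ∩ W := by
      ext x
      simp only [Set.mem_iUnion, Set.mem_inter_iff, hPP, hW, Finset.mem_range]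
      constructor
      · rintro ⟨K, hxA, j, hj, hxj⟩
        exact ⟨hxA, j, hxj⟩
      · rintro ⟨hxA, j, hxj⟩
        exact ⟨j + 1, hxA, j, Nat.lt_succ_self j, hxj⟩
    have hsup1 : lam (A ∩ W) = ⨆ K, lam (A ∩ PP K) := by
      rw [← hPPunion]
      exact hmono1.measure_iUnion
    rw [hsup1]
    refine iSup_le (fun K => ?_)
    -- swap unions
    set GG : ℕ → Set Ω := fun n => A ∩ ⋃ j ∈ Finset.range K, E (wflat j) n with hGG
    have hGGm : ∀ n, MeasurableSet (GG n) := fun n =>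
      hA.inter (MeasurableSet.biUnion (Finset.range K).countable_toSet
        (fun j _ => hEm _ (hwflat𝔔 j) n))
    have hmono2 : Monotone GG := by
      intro n n' hnn' x hx
      refine ⟨hx.1, ?_⟩
      have := hx.2
      simp only [Set.mem_iUnion] at this ⊢
      obtain ⟨j, hj, hxj⟩ := this
      exact ⟨j, hj, hEmono _ (hwflat𝔔 j) hnn' hxj⟩
    have hGGunion : (⋃ n, GG n) = A ∩ PP K := by
      ext x
      simp only [hGG, hPP, Set.mem_iUnion, Set.mem_inter_iff]
      tauto
    have hsup2 : lam (A ∩ PP K) = ⨆ n, lam (GG n) := by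
      rw [← hGGunion]
      exact hmono2.measure_iUnion
    rw [hsup2]
    refine iSup_le (fun n => ?_)
    -- the restricted measure is in R
    set EU : Set Ω := ⋃ j ∈ Finset.range K, E (wflat j) n with hEU
    have hEUm : MeasurableSet EU :=
      MeasurableSet.biUnion (Finset.range K).countable_toSet
        (fun j _ => hEm _ (hwflat𝔔 j) n)
    set ρ : SignedMeasure Ω := lams.restrict EU with hρ
    have hρ_apply : ∀ A' : Set Ω, MeasurableSet A' → ρ A' = (lam (A' ∩ EU)).toReal := by
      intro A' hA'
      rw [hρ, VectorMeasure.restrict_apply _ hEUm hA', hlams_apply _ (hA'.inter hEUm)]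
    have hρR : ρ ∈ R := by
      refine ⟨hMres lams hlamsM EU hEUm, ?_, ?_, n, K, fun i => wflat i, fun i => hwflat𝔔 i, ?_⟩
      · rw [VectorMeasure.le_iff]
        intro A' hA'
        rw [VectorMeasure.zero_apply, hρ_apply A' hA']
        exact ENNReal.toReal_nonneg
      · rw [VectorMeasure.le_iff]
        intro A' hA'
        rw [hρ_apply A' hA', hlams_apply A' hA']
        exact ENNReal.toReal_mono (measure_ne_top _ _) (measure_mono Set.inter_subset_left)
      · intro A' hA'
        rw [hρ_apply A' hA']
        have hcalc : lam (A' ∩ EU) ≤ (n : ℝ≥0∞) * ∑ j ∈ Finset.range K, wflat j A' := by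
          have h1 : A' ∩ EU = ⋃ j ∈ Finset.range K, (A' ∩ E (wflat j) n) := by
            rw [hEU, Set.inter_iUnion₂]
          rw [h1]
          refine le_trans (measure_biUnion_finset_le (μ := lam) (Finset.range K) _) ?_
          rw [Finset.mul_sum]
          refine Finset.sum_le_sum (fun j _ => ?_)
          refine le_trans (hEbound _ (hwflat𝔔 j) n _ Set.inter_subset_right
            (hA'.inter (hEm _ (hwflat𝔔 j) n))) ?_
          exact mul_le_mul_right (measure_mono Set.inter_subset_left) _
        have hfin : (n : ℝ≥0∞) * ∑ j ∈ Finset.range K, wflat j A' ≠ ∞ := by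
          refine ENNReal.mul_ne_top (ENNReal.natCast_ne_top n) ?_
          refine (ENNReal.sum_lt_top.mpr (fun j _ => ?_)).ne
          haveI := hQprob _ (hwflat𝔔 j)
          exact measure_lt_top _ _
        have := ENNReal.toReal_mono hfin hcalc
        refine le_trans this ?_
        rw [ENNReal.toReal_mul, ENNReal.toReal_natCast,
          ENNReal.toReal_sum (fun j _ => by
            haveI := hQprob _ (hwflat𝔔 j); exact measure_ne_top _ _)]
        have hsumeq : ∑ j ∈ Finset.range K, (wflat j A').toReal =
            ∑ i : Fin K, (wflat (i : ℕ) A').toReal := by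
          rw [Finset.sum_range (fun j => (wflat j A').toReal)]
        rw [hsumeq]
    have hρη : ρ ≤ η := hubη ρ hρR
    have h2 : ρ A ≤ η A := (VectorMeasure.le_iff.1 hρη) A hA
    rw [hρ_apply A hA] at h2
    have hGEU : GG n = A ∩ EU := rfl
    rw [hGEU, ← ENNReal.ofReal_toReal (measure_ne_top lam (A ∩ EU))]
    exact ENNReal.ofReal_le_ofReal h2
  have hlamsB' : lams ∈ B' := by
    refine hB'sup R hRB' lams hlamsM ⟨hub, fun η _ h => hleast η h⟩
  refine hB'solid m (hMcaC hm.1) lams hlamsB' (fun A hA => ?_)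
  rw [tv_nonneg_apply lams hlamnonneg hA, hlams_apply A hA,
    ENNReal.ofReal_toReal (measure_ne_top lam A)]

end Minimality

section Zorn

open scoped ENNReal

/-- From a supported alternative one constructs an equivalent majorised family. -/
lemma classS_majorised {𝔓 : Set (Measure Ω)} (h𝔓 : 𝔓.Nonempty)
    (hprob : ∀ P ∈ 𝔓, IsProbabilityMeasure P) (hC : ClassS 𝔓) :
    ∃ 𝔔' : Set (Measure Ω), 𝔔'.Nonempty ∧ (∀ Q ∈ 𝔔', IsProbabilityMeasure Q) ∧
      PolarEquiv 𝔓 𝔔' ∧ Majorised 𝔔' := by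
  classical
  obtain ⟨𝔔, h𝔔ne, h𝔔prob, h𝔔equiv, h𝔔supp⟩ := hC
  set Good : Set (Set (Measure Ω × Set Ω)) :=
    {F | (∀ p ∈ F, p.1 ∈ 𝔔 ∧ MeasurableSet p.2 ∧ p.1 p.2 ≠ 0 ∧
        (∀ N : Set Ω, MeasurableSet N → p.1 (N ∩ p.2) = 0 → Polar 𝔓 (N ∩ p.2))) ∧
      ∀ p ∈ F, ∀ q ∈ F, p ≠ q → Polar 𝔓 (p.2 ∩ q.2)} with hGood
  have hzorn : ∃ F₀, Maximal (· ∈ Good) F₀ := by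
    refine zorn_subset Good (fun c hc hchain => ⟨⋃₀ c, ⟨?_, ?_⟩, fun s hs => subset_sUnion_of_mem hs⟩)
    · rintro p ⟨F, hF, hpF⟩
      exact (hc hF).1 p hpF
    · rintro p ⟨F, hF, hpF⟩ q ⟨F', hF', hqF'⟩ hpq
      rcases hchain.total hF hF' with hsub | hsub
      · exact (hc hF').2 p (hsub hpF) q hqF' hpq
      · exact (hc hF).2 p hpF q (hsub hqF') hpq
  obtain ⟨F₀, hF₀Good, hF₀max⟩ := hzorn
  have hcond := hF₀Good.1
  have hpair := hF₀Good.2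
  -- key maximality claim
  have hkey : ∀ N : Set Ω, MeasurableSet N → (∀ p ∈ F₀, p.1 (N ∩ p.2) = 0) → Polar 𝔓 N := by
    intro N hN hvanish
    by_contra hNpol
    have hN𝔔 : ¬ Polar 𝔔 N := fun h => hNpol ((h𝔔equiv N hN).mpr h)
    rw [Polar] at hN𝔔
    push_neg at hN𝔔
    obtain ⟨Q', hQ', hQ'N⟩ := hN𝔔
    obtain ⟨S', hS'm, hS'c, hS'p⟩ := h𝔔supp Q' hQ'
    set B : Set Ω := N ∩ S' with hB
    have hQ'B : Q' B ≠ 0 := by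
      intro h0
      refine hQ'N ?_
      have : N ⊆ B ∪ S'ᶜ := by
        intro x hx
        by_cases hxS : x ∈ S'
        · exact Or.inl ⟨hx, hxS⟩
        · exact Or.inr hxS
      exact measure_mono_null this (measure_union_null h0 hS'c)
    set p' : Measure Ω × Set Ω := (Q', B) with hp'
    have hp'not : p' ∉ F₀ := by
      intro hmem
      have := hvanish p' hmem
      have hNB : N ∩ p'.2 = B := by
        simp only [hp', hB]
        ext x; simp only [Set.mem_inter_iff]; tauto
      rw [hNB] at this
      exact hQ'B this
    have hinsert : insert p' F₀ ∈ Good := by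
      constructor
      · rintro p (rfl | hpF)
        · refine ⟨hQ', hN.inter hS'm, hQ'B, ?_⟩
          intro N₁ hN₁ h0
          have heq : N₁ ∩ B = (N₁ ∩ N) ∩ S' := by
            rw [hB]; ext x; simp only [Set.mem_inter_iff]; tauto
          rw [heq] at h0 ⊢
          exact hS'p _ (hN₁.inter hN) h0
        · exact hcond p hpF
      · have hpolar_with : ∀ p ∈ F₀, Polar 𝔓 (B ∩ p.2) := by
          intro p hpF
          have hNppol : Polar 𝔓 (N ∩ p.2) :=
            (hcond p hpF).2.2.2 N hN (hvanish p hpF)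
          exact polar_mono (Set.inter_subset_inter_left p.2 Set.inter_subset_left) hNppol
        rintro p (rfl | hpF) q (rfl | hqF) hpq
        · exact absurd rfl hpq
        · exact hpolar_with q hqF
        · rw [Set.inter_comm]
          exact hpolar_with p hpF
        · exact hpair p hpF q hqF hpq
    have hsub := hF₀max hinsert (Set.subset_insert p' F₀)
    exact hp'not (hsub (Set.mem_insert p' F₀))
  have hF₀ne : F₀.Nonempty := by
    rcases Set.eq_empty_or_nonempty F₀ with rfl | h
    · exfalso
      have hPuniv := hkey Set.univ MeasurableSet.univ
        (fun p hp => absurd hp (Set.notMem_empty p))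
      obtain ⟨P₀, hP₀⟩ := h𝔓
      haveI := hprob P₀ hP₀
      have h1 := hPuniv P₀ hP₀
      rw [measure_univ] at h1
      exact one_ne_zero h1
    · exact h
  -- the normalized family
  set 𝔔' : Set (Measure Ω) :=
    {ν | ∃ p ∈ F₀, ν = (p.1 p.2)⁻¹ • p.1.restrict p.2} with h𝔔'
  have hQ𝔔 : ∀ p ∈ F₀, p.1 ∈ 𝔔 := fun p hp => (hcond p hp).1
  have hc_ne : ∀ p ∈ F₀, p.1 p.2 ≠ 0 := fun p hp => (hcond p hp).2.2.1
  have hc_fin : ∀ p ∈ F₀, p.1 p.2 ≠ ∞ := by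
    intro p hp
    haveI := h𝔔prob p.1 (hQ𝔔 p hp)
    exact measure_ne_top _ _
  have hmeas2 : ∀ p ∈ F₀, MeasurableSet p.2 := fun p hp => (hcond p hp).2.1
  have hterm : ∀ p ∈ F₀, ∀ q ∈ F₀, p ≠ q → ∀ A : Set Ω, A ⊆ p.2 ∩ q.2 → q.1 A = 0 := by
    intro p hp q hq hpq A hA
    have hpol : Polar 𝔓 (p.2 ∩ q.2) := hpair p hp q hq hpq
    have hpol𝔔 : Polar 𝔔 (p.2 ∩ q.2) :=
      (h𝔔equiv _ ((hmeas2 p hp).inter (hmeas2 q hq))).mp hpol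
    exact measure_mono_null hA (hpol𝔔 q.1 (hQ𝔔 q hq))
  refine ⟨𝔔', ?_, ?_, ?_, ?_⟩
  · obtain ⟨p, hp⟩ := hF₀ne
    exact ⟨(p.1 p.2)⁻¹ • p.1.restrict p.2, ⟨p, hp, rfl⟩⟩
  · rintro ν ⟨p, hp, rfl⟩
    haveI := h𝔔prob p.1 (hQ𝔔 p hp)
    refine ⟨?_⟩
    rw [Measure.smul_apply, Measure.restrict_apply_univ, smul_eq_mul,
      ENNReal.inv_mul_cancel (hc_ne p hp) (hc_fin p hp)]
  · intro N hN
    constructor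
    · rintro hpol ν ⟨p, hp, rfl⟩
      have hp1 : p.1 N = 0 := ((h𝔔equiv N hN).mp hpol) p.1 (hQ𝔔 p hp)
      rw [Measure.smul_apply, Measure.restrict_apply hN, smul_eq_mul]
      rw [measure_mono_null Set.inter_subset_left hp1, mul_zero]
    · intro hpol
      refine hkey N hN (fun p hp => ?_)
      have := hpol _ ⟨p, hp, rfl⟩
      rw [Measure.smul_apply, Measure.restrict_apply hN, smul_eq_mul] at this
      rcases mul_eq_zero.mp this with h | h
      · exact absurd h (ENNReal.inv_ne_zero.mpr (hc_fin p hp))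
      · exact h
  · refine ⟨Measure.sum (fun p : F₀ => (p : Measure Ω × Set Ω).1.restrict
      (p : Measure Ω × Set Ω).2), ?_⟩
    rintro ν ⟨p₀, hp₀, rfl⟩
    refine ⟨(p₀.2).indicator (fun _ => (p₀.1 p₀.2)⁻¹), ?_, ?_⟩
    · exact (measurable_const).indicator (hmeas2 p₀ hp₀)
    · refine Measure.ext (fun A hA => ?_)
      rw [Measure.smul_apply, Measure.restrict_apply hA, smul_eq_mul,
        withDensity_apply _ hA]
      rw [lintegral_indicator (hmeas2 p₀ hp₀), Measure.restrict_restrict (hmeas2 p₀ hp₀)]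
      rw [setLIntegral_const]
      have hsum : (Measure.sum (fun p : F₀ => (p : Measure Ω × Set Ω).1.restrict
          (p : Measure Ω × Set Ω).2)) (p₀.2 ∩ A) =
          p₀.1 (p₀.2 ∩ A) := by
        rw [Measure.sum_apply _ ((hmeas2 p₀ hp₀).inter hA)]
        have := tsum_eq_single (L := SummationFilter.unconditional _) (f := fun p : F₀ => (p : Measure Ω × Set Ω).1.restrict
          (p : Measure Ω × Set Ω).2 (p₀.2 ∩ A)) ⟨p₀, hp₀⟩ ?_
        · rw [this]
          show (p₀.1.restrict p₀.2) (p₀.2 ∩ A) = p₀.1 (p₀.2 ∩ A)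
          rw [Measure.restrict_apply ((hmeas2 p₀ hp₀).inter hA)]
          congr 1
          ext x; simp only [Set.mem_inter_iff]; tauto
        · rintro ⟨q, hq⟩ hne
          have hqp : q ≠ p₀ := by
            intro h; exact hne (by simp [h])
          show (q.1.restrict q.2) (p₀.2 ∩ A) = 0
          rw [Measure.restrict_apply ((hmeas2 p₀ hp₀).inter hA)]
          refine hterm p₀ hp₀ q hq hqp.symm _ ?_
          intro x hx
          exact ⟨hx.1.1, hx.2⟩
      rw [hsum]
      congr 1
      rw [Set.inter_comm]

end Zorn

/-- Lemma (lem:Luschgy): `𝔓` is of class (S) iff some equivalent set of probability measures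
is majorised; and in that case `sca_𝐜` is the band generated by `𝔔` both in `ca_𝐜` and
in `ca`. -/
theorem classS_iff_majorised_and_band
    {Ω : Type*} [MeasurableSpace Ω] (𝔓 : Set (Measure Ω)) (h𝔓 : 𝔓.Nonempty)
    (hprob : ∀ P ∈ 𝔓, IsProbabilityMeasure P) :
    (ClassS 𝔓 ↔
      ∃ 𝔔 : Set (Measure Ω), 𝔔.Nonempty ∧ (∀ Q ∈ 𝔔, IsProbabilityMeasure Q) ∧
        PolarEquiv 𝔓 𝔔 ∧ Majorised 𝔔) ∧
    (∀ 𝔔 : Set (Measure Ω), 𝔔.Nonempty → (∀ Q ∈ 𝔔, IsProbabilityMeasure Q) →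
      PolarEquiv 𝔓 𝔔 → Majorised 𝔔 →
        IsBandGenBy (caC 𝔓) (scaC 𝔓) (toSgn 𝔔) ∧
        IsBandGenBy Set.univ (scaC 𝔓) (toSgn 𝔔)) := by
  constructor
  · constructor
    · exact fun hC => classS_majorised h𝔓 hprob hC
    · rintro ⟨𝔔, h𝔔ne, h𝔔prob, h𝔔equiv, hmaj⟩
      obtain ⟨μbar, hdens⟩ := hmaj
      exact ⟨𝔔, h𝔔ne, h𝔔prob, h𝔔equiv,
        fun Q hQ => supported_of_density h𝔔equiv μbar hQ hdens⟩
  · intro 𝔔 h𝔔ne h𝔔prob h𝔔equiv hmaj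
    obtain ⟨μbar, hdens⟩ := hmaj
    have hGsub : toSgn 𝔔 ⊆ scaC 𝔓 := toSgn_subset_scaC h𝔔prob h𝔔equiv μbar hdens
    have hres : ∀ s ∈ caC 𝔓, ∀ E : Set Ω, MeasurableSet E → s.restrict E ∈ caC 𝔓 :=
      fun s hs E hE => restrict_mem_caC hs hE
    have hadd : ∀ s ∈ caC 𝔓, ∀ t ∈ caC 𝔓, s + t ∈ caC 𝔓 :=
      fun s hs t ht => add_mem_caC hs ht
    constructor
    · refine ⟨⟨fun s hs => hs.1, zero_mem_scaC,
        fun μ hμ ν hν => add_mem_scaC hμ hν,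
        fun a μ hμ => smul_mem_scaC a hμ,
        fun μ _ ν hν h => solid_mem_scaC hν h,
        fun S hS μ hμ h => sup_closed 𝔓 h𝔓 hprob (caC 𝔓) (subset_refl _) hres hadd
          S hS μ hμ h⟩, hGsub, ?_⟩
      intro B' hB' hGB'
      exact scaC_subset_band h𝔔ne h𝔔prob h𝔔equiv μbar hdens (caC 𝔓) B'
        (subset_refl _) hres hB' hGB'
    · refine ⟨⟨Set.subset_univ _, zero_mem_scaC,
        fun μ hμ ν hν => add_mem_scaC hμ hν,
        fun a μ hμ => smul_mem_scaC a hμ,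
        fun μ _ ν hν h => solid_mem_scaC hν h,
        fun S hS μ hμ h => sup_closed 𝔓 h𝔓 hprob Set.univ (Set.subset_univ _)
          (fun s _ E _ => Set.mem_univ _) (fun s _ t _ => Set.mem_univ _)
          S hS μ hμ h⟩, hGsub, ?_⟩
      intro B' hB' hGB'
      exact scaC_subset_band h𝔔ne h𝔔prob h𝔔equiv μbar hdens Set.univ B'
        (Set.subset_univ _) (fun s _ E _ => Set.mem_univ _) hB' hGB'

end Robust
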